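/- (Privacy threshold on the toric surface.) Let a, b be integers with 0 ≤ b ≤ a ≤ q−2 and q ≥ 3, and let U = {(i,j) ∈ ℤ² : 0 ≤ j ≤ q−2, 0 ≤ i, and (q−2)·i ≤ a(q−2) + (b−a)·j}. Fix P_0 ∈ (𝔽_q^*)² and let A ⊆ (𝔽_q^*)² ∖ {P_0} with |A| ≤ b − 1. Then for every f ∈ 𝔽_q<U> and every s ∈ 𝔽_q there exists g ∈ 𝔽_q<U> with g(P) = f(P) for all P ∈ A and g(P_0) = s; i.e., the privacy threshold of the scheme M(U) is at least b − 1. -/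

import Mathlib

open scoped BigOperators

/-- Evaluation of a Laurent polynomial (given by its finitely supported coefficient
function on exponent vectors in `ℤ²`) at a point of the torus `(Kˣ)²`. -/
noncomputable def laurentEval {K : Type} [Field K] {r : ℕ}
    (f : (Fin r → ℤ) →₀ K) (P : Fin r → Kˣ) : K :=
  ∑ u ∈ f.support, f u * ∏ i, ((P i ^ u i : Kˣ) : K)

/-- The multiplicative character of the exponent lattice attached to a torus point. -/
noncomputable def torusChar {K : Type} [Field K] {r : ℕ} (P : Fin r → Kˣ) :
    Multiplicative (Fin r → ℤ) →* K where
  toFun u := ∏ i, ((P i ^ (Multiplicative.toAdd u) i : Kˣ) : K)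
  map_one' := by simp
  map_mul' u v := by
    simp only [toAdd_mul, Pi.add_apply, zpow_add, Units.val_mul, Finset.prod_mul_distrib]

/-- The evaluation as an algebra hom on the additive monoid algebra. -/
noncomputable def torusEval {K : Type} [Field K] {r : ℕ} (P : Fin r → Kˣ) :
    AddMonoidAlgebra K (Fin r → ℤ) →ₐ[K] K :=
  AddMonoidAlgebra.lift K K (Fin r → ℤ) (torusChar P)

theorem laurentEval_eq {K : Type} [Field K] {r : ℕ}
    (f : (Fin r → ℤ) →₀ K) (P : Fin r → Kˣ) :
    laurentEval f P = torusEval P (AddMonoidAlgebra.ofCoeff f) := by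
  rw [torusEval, AddMonoidAlgebra.lift_apply, laurentEval, Finsupp.sum]
  refine Finset.sum_congr rfl fun u _ => ?_
  simp [torusChar, smul_eq_mul, AddMonoidAlgebra.coeff_ofCoeff]

theorem torusEval_single {K : Type} [Field K] {r : ℕ} (P : Fin r → Kˣ)
    (u : Fin r → ℤ) (c : K) :
    torusEval P (AddMonoidAlgebra.single u c) = c * ∏ i, ((P i ^ u i : Kˣ) : K) := by
  rw [torusEval, AddMonoidAlgebra.lift_single, smul_eq_mul]
  rfl

theorem fin2cases (k : Fin 2) : k = 0 ∨ k = 1 := by omega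

/-- One linear factor: `X_k - Q_k`. -/
noncomputable def torusFactor {K : Type} [Field K] (k : Fin 2) (Q : Fin 2 → Kˣ) :
    AddMonoidAlgebra K (Fin 2 → ℤ) :=
  AddMonoidAlgebra.single (fun i => if i = k then 1 else 0) 1 - AddMonoidAlgebra.single 0 ((Q k : K))

theorem torusEval_torusFactor {K : Type} [Field K] (k : Fin 2) (Q P : Fin 2 → Kˣ) :
    torusEval P (torusFactor k Q) = ((P k : K) - (Q k : K)) := by
  rw [torusFactor, map_sub, torusEval_single, torusEval_single]
  have h1 : ∏ i, ((P i ^ (if i = k then (1:ℤ) else 0) : Kˣ) : K) = (P k : K) := by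
    rw [Fin.prod_univ_two]
    fin_cases k <;> simp
  rw [h1]
  simp

/-- privacy threshold on the toric surface: for `U` the lattice
points of the polytope with vertices `(0,0), (a,0), (b,q−2), (0,q−2)`
(`0 ≤ b ≤ a ≤ q−2`), any `b − 1` shares reveal nothing about the secret. -/
theorem stmt14 {K : Type} [Field K] [Fintype K]
    (q : ℕ) (hq : Fintype.card K = q) (hq3 : 3 ≤ q)
    (a b : ℤ) (hb : 0 ≤ b) (hba : b ≤ a) (ha : a ≤ (q : ℤ) - 2)
    (U : Set (Fin 2 → ℤ))
    (hU : U = {u : Fin 2 → ℤ | 0 ≤ u 1 ∧ u 1 ≤ (q : ℤ) - 2 ∧ 0 ≤ u 0 ∧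
        ((q : ℤ) - 2) * u 0 ≤ a * ((q : ℤ) - 2) + (b - a) * u 1})
    (P₀ : Fin 2 → Kˣ) (A : Finset (Fin 2 → Kˣ)) (hP₀ : P₀ ∉ A)
    (hA : (A.card : ℤ) ≤ b - 1)
    (f : (Fin 2 → ℤ) →₀ K) (hf : ↑f.support ⊆ U) (s : K) :
    ∃ g : (Fin 2 → ℤ) →₀ K, ↑g.support ⊆ U ∧
      (∀ P ∈ A, laurentEval g P = laurentEval f P) ∧ laurentEval g P₀ = s := by
  classical
  -- choose the splitting coordinate for each point of `A`
  set κ : (Fin 2 → Kˣ) → Fin 2 := fun Q => if Q 1 = P₀ 1 then 0 else 1 with hκ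
  set h : AddMonoidAlgebra K (Fin 2 → ℤ) := ∏ Q ∈ A, torusFactor (κ Q) Q with hh
  -- support of h
  have hsupp : ∀ u ∈ h.coeff.support, 0 ≤ u 0 ∧ 0 ≤ u 1 ∧ u 0 + u 1 ≤ (A.card : ℤ) := by
    rw [hh]
    clear hA hP₀ hh
    induction A using Finset.induction_on with
    | empty =>
      intro u hu
      rw [Finset.prod_empty] at hu
      have : u = 0 := by
        have := Finsupp.support_single_subset (α := Fin 2 → ℤ) (M := K) (a := 0) (b := 1)
        have hu' : u ∈ Finsupp.support (Finsupp.single (0 : Fin 2 → ℤ) (1 : K)) := hu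
        simpa using this hu'
      simp [this]
    | insert x s' hx ih =>
      intro u hu
      rw [Finset.prod_insert hx] at hu
      have := AddMonoidAlgebra.support_coeff_mul_subset (torusFactor (κ x) x) (∏ Q ∈ s', torusFactor (κ Q) Q) hu
      rw [Finset.mem_add] at this
      obtain ⟨y, hy, z, hz, rfl⟩ := this
      have hy' : 0 ≤ y 0 ∧ 0 ≤ y 1 ∧ y 0 + y 1 ≤ 1 := by
        have hy2 : y ∈ (Finsupp.single (fun i => if i = κ x then (1:ℤ) else 0) (1:K)).support ∪
            (Finsupp.single (0 : Fin 2 → ℤ) ((x (κ x) : K))).support :=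
          Finsupp.support_sub hy
        rcases Finset.mem_union.mp hy2 with hy3 | hy3
        · have := Finsupp.support_single_subset hy3
          simp only [Finset.mem_singleton] at this
          subst this
          rcases fin2cases (κ x) with hk | hk <;> simp [hk]
        · have := Finsupp.support_single_subset hy3
          simp only [Finset.mem_singleton] at this
          subst this
          simp
      have hz' := ih z hz
      refine ⟨?_, ?_, ?_⟩
      · have : (y + z) 0 = y 0 + z 0 := rfl
        omega
      · have : (y + z) 1 = y 1 + z 1 := rfl
        omega
      · have h0 : (y + z) 0 = y 0 + z 0 := rfl
        have h1 : (y + z) 1 = y 1 + z 1 := rfl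
        rw [Finset.card_insert_of_notMem hx]
        push_cast
        omega
  -- evaluation of h at points of A is zero
  have hevalA : ∀ P ∈ A, torusEval P h = 0 := by
    intro P hP
    rw [hh, map_prod]
    exact Finset.prod_eq_zero hP (by rw [torusEval_torusFactor, sub_self])
  -- evaluation of h at P₀ is nonzero
  have hevalP₀ : torusEval P₀ h ≠ 0 := by
    rw [hh, map_prod]
    refine Finset.prod_ne_zero_iff.mpr fun Q hQ => ?_
    rw [torusEval_torusFactor]
    have hQP : Q ≠ P₀ := fun e => hP₀ (e ▸ hQ)
    rw [sub_ne_zero]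
    intro e
    have e' : Q (κ Q) = P₀ (κ Q) := Units.ext e.symm
    simp only [hκ] at e'
    by_cases h1 : Q 1 = P₀ 1
    · simp only [h1, if_pos] at e'
      apply hQP
      funext i
      fin_cases i
      · exact e'
      · exact h1
    · rw [if_neg h1] at e'
      exact h1 e'
  -- the candidate
  set c : K := (s - torusEval P₀ (AddMonoidAlgebra.ofCoeff f)) / torusEval P₀ h with hc
  set g : AddMonoidAlgebra K (Fin 2 → ℤ) := AddMonoidAlgebra.ofCoeff f + c • h with hg
  refine ⟨g.coeff, ?_, ?_, ?_⟩
  · intro u hu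
    rw [hg] at hu
    have hu' : u ∈ f.support ∪ (c • h).coeff.support := Finsupp.support_add (Finset.mem_coe.mp hu)
    rcases Finset.mem_union.mp hu' with h1 | h1
    · exact hf h1
    · have h2 : u ∈ h.coeff.support := Finsupp.support_smul h1
      obtain ⟨h3, h4, h5⟩ := hsupp u h2
      rw [hU]
      have hq2 : (1:ℤ) ≤ (q:ℤ) - 2 := by
        have : (3:ℤ) ≤ (q:ℤ) := by exact_mod_cast hq3
        omega
      refine ⟨h4, by omega, h3, ?_⟩
      nlinarith [h3, h4, h5, hA, hq2, mul_nonneg (sub_nonneg.mpr (by omega : u 1 ≤ b - 1 - u 0)) (by omega : (0:ℤ) ≤ (q:ℤ) - 2 - a + b)]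
  · intro P hP
    rw [laurentEval_eq, laurentEval_eq, AddMonoidAlgebra.ofCoeff_coeff]
    have : torusEval P g = torusEval P (AddMonoidAlgebra.ofCoeff f) + c * torusEval P h := by
      rw [hg, map_add, map_smul, smul_eq_mul]
    rw [this, hevalA P hP, mul_zero, add_zero]
  · rw [laurentEval_eq, AddMonoidAlgebra.ofCoeff_coeff]
    have : torusEval P₀ g = torusEval P₀ (AddMonoidAlgebra.ofCoeff f) + c * torusEval P₀ h := by
      rw [hg, map_add, map_smul, smul_eq_mul]
    rw [this, hc, div_mul_cancel₀ _ hevalP₀]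
    ring
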